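/- Let G be a linearly ordered group and let τ be a topology on 𝓑(G) such that for every s ∈ 𝓑(G) the left translation x ↦ s·x and the right translation x ↦ x·s are continuous. If the space (𝓑(G), τ) contains an isolated point, then (𝓑(G), τ) is discrete. -/

import Mathlib

/-- The multiplication of the bicyclic extension `𝓑(G) = G × G` of a linearly ordered
group `G`: `(a,b)·(c,d) = (c·b⁻¹·a, d)` if `b < c`; `(a,d)` if `b = c`;
`(a, b·c⁻¹·d)` if `b > c`. -/
def bmul {G : Type*} [Group G] [LinearOrder G] (s t : G × G) : G × G :=
  if s.2 < t.1 then (t.1 * s.2⁻¹ * s.1, t.2)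
  else if s.2 = t.1 then (s.1, t.2)
  else (s.1, s.2 * t.1⁻¹ * t.2)

section Aux

variable {G : Type*} [Group G] [LinearOrder G]

lemma bmul_of_lt {s t : G × G} (h : s.2 < t.1) :
    bmul s t = (t.1 * s.2⁻¹ * s.1, t.2) := if_pos h

lemma bmul_of_eq {s t : G × G} (h : s.2 = t.1) :
    bmul s t = (s.1, t.2) := by
  unfold bmul
  rw [if_neg (by simp [h]), if_pos h]

lemma bmul_of_gt {s t : G × G} (h : t.1 < s.2) :
    bmul s t = (s.1, s.2 * t.1⁻¹ * t.2) := by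
  unfold bmul
  rw [if_neg h.asymm, if_neg h.ne']

lemma cancel_aux {u v w : G} (h : u * v⁻¹ * w = w) : u = v := by
  have h1 : u * v⁻¹ * w = 1 * w := by rw [h, one_mul]
  exact mul_inv_eq_one.1 (mul_right_cancel h1)

variable [CovariantClass G G (Function.swap (· * ·)) (· ≤ ·)]

lemma mul_lt_self_of_lt_one {g : G} (h : g < 1) (y : G) : g * y < y := by
  refine lt_of_le_of_ne ?_ (fun he => h.ne (mul_right_cancel (b := y) (by rw [he, one_mul])))
  simpa using mul_le_mul_left h.le y

lemma exists_lt_of_ne_one {g : G} (hg : g ≠ 1) (y : G) : ∃ u : G, u < y := by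
  rcases hg.lt_or_gt with h | h
  · exact ⟨g * y, mul_lt_self_of_lt_one h y⟩
  · refine ⟨g⁻¹ * y, mul_lt_self_of_lt_one ?_ y⟩
    refine lt_of_le_of_ne ?_ (fun he => hg.symm (inv_eq_one.1 he).symm)
    have := mul_le_mul_left h.le g⁻¹
    simpa using this

end Aux

/-- Lemma 3.1 for `𝓑(G)`: if a topology on `𝓑(G)` with separately continuous
multiplication has an isolated point, then it is discrete. -/
theorem isolated_point_implies_discrete {G : Type*} [Group G] [LinearOrder G]
    [CovariantClass G G (· * ·) (· ≤ ·)]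
    [CovariantClass G G (Function.swap (· * ·)) (· ≤ ·)]
    [TopologicalSpace (G × G)]
    (hl : ∀ s : G × G, Continuous fun x : G × G => bmul s x)
    (hr : ∀ s : G × G, Continuous fun x : G × G => bmul x s)
    (p : G × G) (hp : IsOpen {p}) :
    DiscreteTopology (G × G) := by
  rw [discreteTopology_iff_isOpen_singleton]
  intro q
  by_cases hG : ∀ g : G, g = 1
  · have hq : q = p := by
      ext
      · rw [hG q.1, hG p.1]
      · rw [hG q.2, hG p.2]
    rw [hq]; exact hp
  · push_neg at hG
    obtain ⟨g, hg⟩ := hG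
    obtain ⟨b', hb'⟩ := exists_lt_of_ne_one hg q.1
    obtain ⟨c, hc⟩ := exists_lt_of_ne_one hg q.2
    set s : G × G := (b' * q.1⁻¹ * p.1, b') with hs
    set t : G × G := (c, c * q.2⁻¹ * p.2) with ht
    have hcont : Continuous fun x : G × G => bmul (bmul s x) t := (hr t).comp (hl s)
    have hfib : (fun x : G × G => bmul (bmul s x) t) ⁻¹' {p} = {q} := by
      ext x
      simp only [Set.mem_preimage, Set.mem_singleton_iff]
      constructor
      · intro hx
        obtain ⟨x1, x2⟩ := x
        rcases lt_trichotomy b' x1 with h1 | h1 | h1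
        · rw [bmul_of_lt (show s.2 < (x1, x2).1 from h1)] at hx
          rcases lt_trichotomy x2 c with h2 | h2 | h2
          · rw [bmul_of_lt (show (_, x2).2 < t.1 from h2)] at hx
            have h2' : c * q.2⁻¹ * p.2 = p.2 := congrArg Prod.snd hx
            exact absurd (cancel_aux h2') hc.ne
          · rw [bmul_of_eq (show (_, x2).2 = t.1 from h2)] at hx
            have h2' : c * q.2⁻¹ * p.2 = p.2 := congrArg Prod.snd hx
            exact absurd (cancel_aux h2') hc.ne
          · rw [bmul_of_gt (show t.1 < (_, x2).2 from h2)] at hx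
            have e1 : x1 * b'⁻¹ * (b' * q.1⁻¹ * p.1) = p.1 := congrArg Prod.fst hx
            have e2 : x2 * c⁻¹ * (c * q.2⁻¹ * p.2) = p.2 := congrArg Prod.snd hx
            have e1' : x1 * q.1⁻¹ * p.1 = p.1 :=
              (show x1 * q.1⁻¹ * p.1 = x1 * b'⁻¹ * (b' * q.1⁻¹ * p.1) by group).trans e1
            have e2' : x2 * q.2⁻¹ * p.2 = p.2 :=
              (show x2 * q.2⁻¹ * p.2 = x2 * c⁻¹ * (c * q.2⁻¹ * p.2) by group).trans e2
            have := cancel_aux e1'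
            have := cancel_aux e2'
            ext <;> simp_all
        · rw [bmul_of_eq (show s.2 = (x1, x2).1 from h1)] at hx
          rcases lt_trichotomy x2 c with h2 | h2 | h2
          · rw [bmul_of_lt (show (s.1, x2).2 < t.1 from h2)] at hx
            have h2' : c * q.2⁻¹ * p.2 = p.2 := congrArg Prod.snd hx
            exact absurd (cancel_aux h2') hc.ne
          · rw [bmul_of_eq (show (s.1, x2).2 = t.1 from h2)] at hx
            have h2' : c * q.2⁻¹ * p.2 = p.2 := congrArg Prod.snd hx
            exact absurd (cancel_aux h2') hc.ne
          · rw [bmul_of_gt (show t.1 < (s.1, x2).2 from h2)] at hx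
            have e1 : b' * q.1⁻¹ * p.1 = p.1 := congrArg Prod.fst hx
            exact absurd (cancel_aux e1) hb'.ne
        · rw [bmul_of_gt (show (x1, x2).1 < s.2 from h1)] at hx
          rcases lt_trichotomy (b' * x1⁻¹ * x2) c with h2 | h2 | h2
          · rw [bmul_of_lt (show (s.1, b' * x1⁻¹ * x2).2 < t.1 from h2)] at hx
            have h2' : c * q.2⁻¹ * p.2 = p.2 := congrArg Prod.snd hx
            exact absurd (cancel_aux h2') hc.ne
          · rw [bmul_of_eq (show (s.1, b' * x1⁻¹ * x2).2 = t.1 from h2)] at hx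
            have h2' : c * q.2⁻¹ * p.2 = p.2 := congrArg Prod.snd hx
            exact absurd (cancel_aux h2') hc.ne
          · rw [bmul_of_gt (show t.1 < (s.1, b' * x1⁻¹ * x2).2 from h2)] at hx
            have e1 : b' * q.1⁻¹ * p.1 = p.1 := congrArg Prod.fst hx
            exact absurd (cancel_aux e1) hb'.ne
      · intro hx
        rw [hx]
        rw [bmul_of_lt (show s.2 < q.1 from hb')]
        rw [bmul_of_gt (show t.1 < (q.1 * b'⁻¹ * s.1, q.2).2 from hc)]
        ext
        · show q.1 * b'⁻¹ * (b' * q.1⁻¹ * p.1) = p.1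
          group
        · show q.2 * c⁻¹ * (c * q.2⁻¹ * p.2) = p.2
          group
    have : IsOpen ((fun x : G × G => bmul (bmul s x) t) ⁻¹' {p}) := hp.preimage hcont
    rwa [hfib] at this
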